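/- Let t >= 1 be an integer, a = 2/(3t+3+sqrt(9t^2+18t-3)) and b = 1/3 - t*a. Then 0 < a < 1/(3t), b > 0, 3t*a + 3*b = 1, and the point (a,...,a, b, b, b) with 3t copies of a lies on the standard simplex Delta_{3t+2} and is the unique maximizer of the Lagrangian polynomial of K_{3(t+1)}^{3-}. -/

import Mathlib

set_option linter.unusedSectionVars false
set_option linter.unusedTactic false
set_option linter.unreachableTactic false
set_option linter.unusedVariables false
set_option maxHeartbeats 1600000


open Finset

/-- The Lagrangian polynomial of a hypergraph `H` on vertex set `V`. -/
def lagPoly {V : Type*} [DecidableEq V] (H : Finset (Finset V)) (x : V → ℝ) : ℝ :=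
  ∑ E ∈ H, ∏ i ∈ E, x i

/-- `K_{3(t+1)}^{3-}`: the complete 3-graph on `3t+3` vertices minus the single edge
consisting of the last three vertices. -/
def Kminus (t : ℕ) : Finset (Finset (Fin (3 * t + 3))) :=
  (Finset.univ.powersetCard 3).erase (Finset.univ.filter (fun i => 3 * t ≤ i.val))


section Helpers

variable {V : Type*} [DecidableEq V]

noncomputable def esym (s : Finset V) (f : V → ℝ) (k : ℕ) : ℝ :=
  ∑ A ∈ s.powersetCard k, ∏ i ∈ A, f i

lemma esym_def (s : Finset V) (f : V → ℝ) (k : ℕ) :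
    esym s f k = ∑ A ∈ s.powersetCard k, ∏ i ∈ A, f i := rfl

lemma esym_zero (s : Finset V) (f : V → ℝ) : esym s f 0 = 1 := by
  simp [esym]

lemma esym_one (s : Finset V) (f : V → ℝ) : esym s f 1 = ∑ i ∈ s, f i := by
  simp [esym, powersetCard_one, Finset.sum_map]

lemma esym_insert {a : V} {s : Finset V} (h : a ∉ s) (f : V → ℝ) (k : ℕ) :
    esym (insert a s) f (k + 1) = esym s f (k + 1) + f a * esym s f k := by
  unfold esym
  rw [powersetCard_succ_insert h, sum_union, sum_image, Finset.mul_sum]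
  · congr 1
    refine Finset.sum_congr rfl fun E hE => ?_
    rw [mem_powersetCard] at hE
    rw [Finset.prod_insert (fun hmem => h (hE.1 hmem))]
  · intro E hE F hF hEF
    rw [mem_coe, mem_powersetCard] at hE hF
    have ha : a ∉ E := fun hmem => h (hE.1 hmem)
    have hb : a ∉ F := fun hmem => h (hF.1 hmem)
    have := congrArg (Finset.erase · a) hEF
    simpa [Finset.erase_insert ha, Finset.erase_insert hb] using this
  · rw [Finset.disjoint_left]
    intro E hE hE2
    rw [mem_powersetCard] at hE
    simp only [Finset.mem_image] at hE2
    obtain ⟨F, hF, rfl⟩ := hE2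
    exact h (hE.1 (Finset.mem_insert_self a F))

lemma esym_nonneg (s : Finset V) (f : V → ℝ) (k : ℕ) (hf : ∀ i ∈ s, 0 ≤ f i) :
    0 ≤ esym s f k := by
  refine Finset.sum_nonneg fun E hE => Finset.prod_nonneg fun i hi => ?_
  rw [mem_powersetCard] at hE
  exact hf i (hE.1 hi)

/-- `2·e₂ = S² - P₂`. -/
lemma two_esym_two (s : Finset V) (f : V → ℝ) :
    2 * esym s f 2 = (∑ i ∈ s, f i) ^ 2 - ∑ i ∈ s, f i ^ 2 := by
  induction s using Finset.induction_on with
  | empty => rw [esym, powersetCard_eq_empty.2 (by simp)]; simp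
  | insert a s h ih =>
    rw [show (2 : ℕ) = 1 + 1 from rfl, esym_insert h, esym_one,
      Finset.sum_insert h, Finset.sum_insert h]
    ring_nf
    ring_nf at ih
    linarith [ih]

/-- deviation identity -/
lemma dev_identity (s : Finset V) (f : V → ℝ) (c : ℝ) :
    ∑ i ∈ s, (f i - c) ^ 2
      = (∑ i ∈ s, f i ^ 2) - 2 * c * (∑ i ∈ s, f i) + s.card * c ^ 2 := by
  rw [Finset.sum_congr rfl (fun i _ => by ring :
    ∀ i ∈ s, (f i - c) ^ 2 = f i ^ 2 - 2 * c * f i + c ^ 2)]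
  rw [Finset.sum_add_distrib, Finset.sum_sub_distrib, ← Finset.mul_sum, Finset.sum_const]
  push_cast; ring

/-- constant evaluation -/
lemma esym_const (s : Finset V) (f : V → ℝ) (c : ℝ) (k : ℕ) (hf : ∀ i ∈ s, f i = c) :
    esym s f k = (s.card.choose k : ℝ) * c ^ k := by
  unfold esym
  rw [Finset.sum_congr rfl (fun E hE => ?_), Finset.sum_const, card_powersetCard,
    nsmul_eq_mul]
  rw [mem_powersetCard] at hE
  rw [Finset.prod_congr rfl fun i hi => hf i (hE.1 hi), Finset.prod_const, hE.2]

lemma esym_eq_zero_of_lt {s : Finset V} {k : ℕ} (h : s.card < k) (f : V → ℝ) :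
    esym s f k = 0 := by
  rw [esym, powersetCard_eq_empty.2 h, Finset.sum_empty]

lemma esym_two_le (s : Finset V) (f : V → ℝ) :
    (s.card : ℝ) * (2 * esym s f 2) ≤ ((s.card : ℝ) - 1) * (∑ i ∈ s, f i) ^ 2 := by
  have h := sq_sum_le_card_mul_sum_sq (s := s) (f := f)
  rw [two_esym_two]
  nlinarith [h]

lemma esym_three_le (s : Finset V) (f : V → ℝ) (hf : ∀ i ∈ s, 0 ≤ f i) :
    6 * (s.card : ℝ) ^ 3 * esym s f 3
      ≤ (s.card : ℝ) * ((s.card : ℝ) - 1) * ((s.card : ℝ) - 2) * (∑ i ∈ s, f i) ^ 3 := by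
  revert hf
  induction s using Finset.induction_on with
  | empty => intro hf; simp [esym_eq_zero_of_lt (by simp : (∅ : Finset V).card < 3)]
  | @insert a s hns ih =>
    intro hf
    have hz : 0 ≤ f a := hf a (mem_insert_self a s)
    have hf' : ∀ i ∈ s, 0 ≤ f i := fun i hi => hf i (mem_insert_of_mem hi)
    have hS : 0 ≤ ∑ i ∈ s, f i := Finset.sum_nonneg hf'
    have h3 := ih hf'
    have h2 := esym_two_le s f
    have hE2 : 0 ≤ esym s f 2 := esym_nonneg s f 2 hf'
    have hE3 : 0 ≤ esym s f 3 := esym_nonneg s f 3 hf'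
    rw [Finset.card_insert_of_notMem hns, Finset.sum_insert hns,
      show (3:ℕ) = 2 + 1 from rfl, esym_insert hns]
    rcases Nat.lt_or_ge s.card 2 with hc | hc
    · have e3z : esym s f (2+1) = 0 := esym_eq_zero_of_lt (by omega) f
      have e2z : esym s f 2 = 0 := esym_eq_zero_of_lt hc f
      rw [e3z, e2z]
      interval_cases h : s.card <;> norm_num <;> positivity
    · have hn2 : (2:ℝ) ≤ (s.card : ℝ) := by exact_mod_cast hc
      set n : ℝ := (s.card : ℝ) with hn
      set S : ℝ := ∑ i ∈ s, f i with hSdef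
      set z : ℝ := f a with hzdef
      set E2 : ℝ := esym s f 2
      set E3 : ℝ := esym s f (2+1)
      have hnpos : (0:ℝ) < n := by linarith
      push_cast
      have key : (n+1)^2*((n-2)*S^3+3*n*z*S^2) ≤ n^3*(S+z)^3 := by
        nlinarith [mul_nonneg (sq_nonneg (n*z-S)) (show (0:ℝ) ≤ n*(S+z)+2*(n+1)*S by positivity)]
      have step2 : (n+1)^3*(6*n^3*E3) ≤ (n+1)^3*(n*(n-1)*(n-2)*S^3) :=
        mul_le_mul_of_nonneg_left (by simpa using h3) (by positivity)
      have step3 : 3*(n+1)^3*n^2*z*(n*(2*E2)) ≤ 3*(n+1)^3*n^2*z*((n-1)*S^2) :=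
        mul_le_mul_of_nonneg_left (by simpa using h2) (by positivity)
      have step5 : (n+1)*n*(n-1)*((n+1)^2*((n-2)*S^3+3*n*z*S^2))
          ≤ (n+1)*n*(n-1)*(n^3*(S+z)^3) :=
        mul_le_mul_of_nonneg_left key (by nlinarith)
      have final : n^3 * (6*(n+1)^3*(E3 + z*E2)) ≤ n^3 * ((n+1)*((n+1)-1)*((n+1)-2)*(z+S)^3) := by
        nlinarith [step2, step3, step5]
      exact le_of_mul_le_mul_left final (by positivity)

lemma esym_insert_one {a : V} {s : Finset V} (h : a ∉ s) (f : V → ℝ) :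
    esym (insert a s) f 1 = esym s f 1 + f a := by
  have := esym_insert h f 0
  norm_num [esym_zero] at this
  simpa using this

lemma esym_insert_two {a : V} {s : Finset V} (h : a ∉ s) (f : V → ℝ) :
    esym (insert a s) f 2 = esym s f 2 + f a * esym s f 1 := by
  have := esym_insert h f 1
  norm_num at this
  simpa using this

lemma esym_insert_three {a : V} {s : Finset V} (h : a ∉ s) (f : V → ℝ) :
    esym (insert a s) f 3 = esym s f 3 + f a * esym s f 2 := by
  have := esym_insert h f 2
  norm_num at this
  simpa using this

lemma six_choose_three (n : ℕ) :
    (6 : ℝ) * (n.choose 3 : ℝ) = (n : ℝ) * ((n : ℝ) - 1) * ((n : ℝ) - 2) := by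
  induction n with
  | zero => norm_num
  | succ n ih =>
    have hc : ((n+1).choose 3 : ℝ) = (n.choose 2 : ℝ) + (n.choose 3 : ℝ) := by
      rw [Nat.choose_succ_succ]; push_cast; ring
    have h2 : ((n.choose 2 : ℕ) : ℝ) = (n:ℝ) * ((n:ℝ) - 1) / 2 := Nat.cast_choose_two (K := ℝ) n
    rw [hc, h2]
    push_cast
    linear_combination ih

lemma f_key (t : ℕ) (ht : 1 ≤ t) (a α : ℝ) (ha : 0 < a) (h1 : 3 * (t:ℝ) * a < 1)
    (hca : (3 * (t:ℝ) + 3) * a = 3 * a ^ 2 + 1) (hα0 : 0 ≤ α) (hα1 : 3 * (t:ℝ) * α ≤ 1) :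
    (2 * α ^ 3 - (3 * (t:ℝ) + 3) * α ^ 2 + 2 * α)
      ≤ 2 * a ^ 3 - (3 * (t:ℝ) + 3) * a ^ 2 + 2 * a ∧
    (α ≠ a → (2 * α ^ 3 - (3 * (t:ℝ) + 3) * α ^ 2 + 2 * α)
      < 2 * a ^ 3 - (3 * (t:ℝ) + 3) * a ^ 2 + 2 * a) := by
  have ht1 : (1:ℝ) ≤ (t:ℝ) := by exact_mod_cast ht
  have key : a * ((2 * a ^ 3 - (3 * (t:ℝ) + 3) * a ^ 2 + 2 * a)
      - (2 * α ^ 3 - (3 * (t:ℝ) + 3) * α ^ 2 + 2 * α))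
      = (α - a) ^ 2 * ((1 - a ^ 2) - 2 * a * α) := by
    linear_combination (α ^ 2 - a ^ 2) * hca
  have hpos : 0 < (1 - a ^ 2) - 2 * a * α := by nlinarith
  constructor
  · nlinarith [sq_nonneg (α - a), mul_nonneg (sq_nonneg (α - a)) hpos.le]
  · intro hne
    have hne' : α - a ≠ 0 := sub_ne_zero.mpr hne
    have h2 : 0 < (α - a) ^ 2 := by positivity
    nlinarith [mul_pos h2 hpos]

end Helpers

/-- With `a = 2/(3t + 3 + √(9t² + 18t - 3))` and `b = 1/3 - t·a`: `0 < a < 1/(3t)`,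
`b > 0`, `3t·a + 3b = 1`, and the point assigning `a` to the first `3t` vertices and `b`
to the last three lies on the simplex and is the unique maximizer of the Lagrangian
polynomial of `K_{3(t+1)}^{3-}`. -/
theorem Kminus_unique_optimum (t : ℕ) (ht : 1 ≤ t) :
    let a : ℝ := 2 / (3 * t + 3 + Real.sqrt (9 * (t : ℝ) ^ 2 + 18 * t - 3))
    let b : ℝ := 1 / 3 - t * a
    let x : Fin (3 * t + 3) → ℝ := fun i => if (i : ℕ) < 3 * t then a else b
    0 < a ∧ a < 1 / (3 * t) ∧ 0 < b ∧ 3 * t * a + 3 * b = 1 ∧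
      x ∈ stdSimplex ℝ (Fin (3 * t + 3)) ∧
      (∀ y ∈ stdSimplex ℝ (Fin (3 * t + 3)), lagPoly (Kminus t) y ≤ lagPoly (Kminus t) x) ∧
      (∀ y ∈ stdSimplex ℝ (Fin (3 * t + 3)),
        lagPoly (Kminus t) y = lagPoly (Kminus t) x → y = x) := by
  intro a b x
  have ht1 : (1:ℝ) ≤ (t:ℝ) := by exact_mod_cast ht
  -- scalar facts
  have hD : (0:ℝ) ≤ 9*(t:ℝ)^2+18*t-3 := by nlinarith
  set s0 : ℝ := Real.sqrt (9 * (t : ℝ) ^ 2 + 18 * t - 3) with hs0def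
  have hs0 : 0 ≤ s0 := Real.sqrt_nonneg _
  have hs0sq : s0^2 = 9*(t:ℝ)^2+18*t-3 := Real.sq_sqrt hD
  have hden : (0:ℝ) < 3*(t:ℝ)+3+s0 := by linarith
  have hadef : a = 2/(3*(t:ℝ)+3+s0) := rfl
  have ha : 0 < a := by rw [hadef]; positivity
  have hs0gt : 3*(t:ℝ)-3 < s0 := by nlinarith
  have h3ta : 3*(t:ℝ)*a < 1 := by
    have h' : 3*(t:ℝ)*a = 6*t/(3*(t:ℝ)+3+s0) := by rw [hadef]; ring
    rw [h', div_lt_one hden]; linarith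
  have hmul : a*(3*(t:ℝ)+3+s0) = 2 := by
    rw [hadef]; field_simp
  have e1 : a*s0 = 2 - (3*(t:ℝ)+3)*a := by linear_combination hmul
  have e2 : a^2*(9*(t:ℝ)^2+18*t-3) = (2 - (3*(t:ℝ)+3)*a)^2 := by
    calc a^2*(9*(t:ℝ)^2+18*t-3) = (a*s0)^2 := by rw [← hs0sq]; ring
    _ = (2 - (3*(t:ℝ)+3)*a)^2 := by rw [e1]
  have hca : (3*(t:ℝ)+3)*a = 3*a^2+1 := by linear_combination e2/4
  have hbdef : b = 1/3 - (t:ℝ)*a := rfl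
  have hb : 0 < b := by rw [hbdef]; linarith
  have hxdef : ∀ i : Fin (3*t+3), x i = if (i : ℕ) < 3 * t then a else b := fun i => rfl
  clear_value x b a
  -- index setup
  set A : Finset (Fin (3*t+3)) := univ.filter (fun i => (i:ℕ) < 3*t) with hAdef
  have hw0lt : 3*t < 3*t+3 := by omega
  have hw1lt : 3*t+1 < 3*t+3 := by omega
  have hw2lt : 3*t+2 < 3*t+3 := by omega
  set w0 : Fin (3*t+3) := ⟨3*t, hw0lt⟩ with hw0def
  set w1 : Fin (3*t+3) := ⟨3*t+1, hw1lt⟩ with hw1def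
  set w2 : Fin (3*t+3) := ⟨3*t+2, hw2lt⟩ with hw2def
  have hw2A : w2 ∉ A := by simp [hAdef, hw2def]
  have hw1s : w1 ∉ insert w2 A := by simp [hAdef, Fin.ext_iff, hw1def, hw2def]
  have hw0s : w0 ∉ insert w1 (insert w2 A) := by simp [hAdef, Fin.ext_iff, hw0def, hw1def, hw2def]
  have huniv : (univ : Finset (Fin (3*t+3))) = insert w0 (insert w1 (insert w2 A)) := by
    ext i
    have hi := i.isLt
    simp only [mem_univ, mem_insert, hAdef, mem_filter, Fin.ext_iff, true_iff, true_and, hw0def, hw1def, hw2def, Fin.val_mk]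
    omega
  have hcardA : A.card = 3*t := by
    have hc := congrArg Finset.card huniv
    rw [card_univ, Fintype.card_fin, card_insert_of_notMem hw0s,
      card_insert_of_notMem hw1s, card_insert_of_notMem hw2A] at hc
    omega
  have hB : univ.filter (fun i : Fin (3*t+3) => 3*t ≤ (i:ℕ)) = {w0, w1, w2} := by
    ext i
    have hi := i.isLt
    simp only [mem_filter, mem_univ, mem_insert, mem_singleton, Fin.ext_iff, true_and, hw0def, hw1def, hw2def, Fin.val_mk]
    omega
  have hw0ne1 : w0 ∉ ({w1, w2} : Finset (Fin (3*t+3))) := by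
    simp [Fin.ext_iff, hw0def, hw1def, hw2def]
  have hw1ne2 : w1 ∉ ({w2} : Finset (Fin (3*t+3))) := by
    simp [Fin.ext_iff, hw1def, hw2def]
  have hcardB : ({w0, w1, w2} : Finset (Fin (3*t+3))).card = 3 := by
    rw [card_insert_of_notMem hw0ne1, card_insert_of_notMem hw1ne2, card_singleton]
  have hBmem : ({w0,w1,w2} : Finset (Fin (3*t+3))) ∈ powersetCard 3 univ :=
    mem_powersetCard.2 ⟨subset_univ _, hcardB⟩
  -- decomposition
  have decomp : ∀ y : Fin (3*t+3) → ℝ, lagPoly (Kminus t) y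
      = esym A y 3 + (y w0 + y w1 + y w2) * esym A y 2
        + (y w0 * y w1 + y w0 * y w2 + y w1 * y w2) * esym A y 1 := by
    intro y
    have h0 : lagPoly (Kminus t) y
        = ∑ E ∈ (univ.powersetCard 3).erase {w0,w1,w2}, ∏ i ∈ E, y i := by
      rw [lagPoly, Kminus, hB]
    rw [h0, Finset.sum_erase_eq_sub hBmem]
    have hprod : ∏ i ∈ ({w0,w1,w2} : Finset (Fin (3*t+3))), y i = y w0 * (y w1 * y w2) := by
      rw [prod_insert hw0ne1, prod_insert hw1ne2, prod_singleton]
    have hsum3 : ∑ E ∈ univ.powersetCard 3, ∏ i ∈ E, y i = esym univ y 3 := by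
      rw [esym_def]
    rw [hprod, hsum3, huniv, esym_insert_three hw0s, esym_insert_three hw1s,
      esym_insert_two hw1s, esym_insert_three hw2A, esym_insert_two hw2A,
      esym_insert_one hw2A]
    ring
  have hsumdec : ∀ y : Fin (3*t+3) → ℝ,
      ∑ i, y i = y w0 + y w1 + y w2 + ∑ i ∈ A, y i := by
    intro y
    rw [huniv, sum_insert hw0s, sum_insert hw1s, sum_insert hw2A]
    ring
  -- values at x
  have hxw0 : x w0 = b := by rw [hxdef]; simp [hw0def]
  have hxw1 : x w1 = b := by rw [hxdef]; simp [hw1def]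
  have hxw2 : x w2 = b := by rw [hxdef]; simp [hw2def]
  have hxA : ∀ i ∈ A, x i = a := by
    intro i hi
    rw [hAdef, mem_filter] at hi
    rw [hxdef, if_pos hi.2]
  have hxA1 : ∑ i ∈ A, x i = 3*(t:ℝ)*a := by
    rw [Finset.sum_congr rfl hxA, Finset.sum_const, hcardA, nsmul_eq_mul]
    push_cast; ring
  have hsumx : ∑ i, x i = 1 := by
    rw [hsumdec x, hxw0, hxw1, hxw2, hxA1, hbdef]; ring
  -- value of lagPoly at x
  have hC3 : ((3*t).choose 3 : ℝ) = (3*(t:ℝ))*(3*(t:ℝ)-1)*(3*(t:ℝ)-2)/6 := by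
    have := six_choose_three (3*t)
    push_cast at this ⊢
    linarith
  have hC2 : ((3*t).choose 2 : ℝ) = (3*(t:ℝ))*(3*(t:ℝ)-1)/2 := by
    have := Nat.cast_choose_two (K := ℝ) (3*t)
    push_cast at this ⊢
    linarith
  have hex3 : esym A x 3 = ((3*t).choose 3 : ℝ) * a^3 := by
    rw [esym_const A x a 3 hxA, hcardA]
  have hex2 : esym A x 2 = ((3*t).choose 2 : ℝ) * a^2 := by
    rw [esym_const A x a 2 hxA, hcardA]
  have hex1 : esym A x 1 = 3*(t:ℝ)*a := by rw [esym_one]; exact hxA1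
  have lagx : lagPoly (Kminus t) x
      = (t:ℝ)/2 * (2*a^3 - (3*(t:ℝ)+3)*a^2 + 2*a) := by
    rw [decomp x, hex3, hex2, hex1, hxw0, hxw1, hxw2, hC3, hC2, hbdef]
    ring
  clear_value w0 w1 w2 A
  -- main bound and uniqueness
  have htpos : (0:ℝ) < (t:ℝ) := by linarith
  have htne : (t:ℝ) ≠ 0 := ne_of_gt htpos
  have main : ∀ y ∈ stdSimplex ℝ (Fin (3*t+3)),
      lagPoly (Kminus t) y ≤ lagPoly (Kminus t) x ∧
      (lagPoly (Kminus t) y = lagPoly (Kminus t) x → y = x) := by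
    intro y hy
    obtain ⟨hy0, hy1⟩ := hy
    have hyA : ∀ i ∈ A, 0 ≤ y i := fun i _ => hy0 i
    set S : ℝ := ∑ i ∈ A, y i with hSdef
    set p : ℝ := y w0 + y w1 + y w2 with hpdef
    have hS0 : 0 ≤ S := by rw [hSdef]; exact Finset.sum_nonneg hyA
    have hp0 : 0 ≤ p := by
      have h0 := hy0 w0; have h1 := hy0 w1; have h2 := hy0 w2
      rw [hpdef]; linarith only [h0, h1, h2]
    have hps : p + S = 1 := by
      have hh := hsumdec y
      rw [hy1] at hh
      rw [hpdef, hSdef]; linarith only [hh]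
    set N : ℝ := 3*(t:ℝ) with hNdef
    have hNpos : (0:ℝ) < N := by rw [hNdef]; linarith only [htpos]
    have hNne : N ≠ 0 := ne_of_gt hNpos
    have hN3pos : (0:ℝ) < 6*N^3 := by
      have := pow_pos hNpos 3; linarith only [this]
    have h2Npos : (0:ℝ) < 2*N := by linarith only [hNpos]
    have hcardA' : ((A.card : ℕ) : ℝ) = N := by rw [hcardA, hNdef]; push_cast; ring
    have h2 := esym_two_le A y
    rw [hcardA', ← hSdef] at h2
    have h3 := esym_three_le A y hyA
    rw [hcardA', ← hSdef] at h3
    have hq : 3*(y w0 * y w1 + y w0 * y w2 + y w1 * y w2) ≤ p^2 := by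
      rw [hpdef]
      nlinarith only [sq_nonneg (y w0 - y w1), sq_nonneg (y w0 - y w2), sq_nonneg (y w1 - y w2)]
    have t1 : esym A y 3 ≤ N*(N-1)*(N-2)*S^3/(6*N^3) := by
      rw [le_div_iff₀ hN3pos]
      linarith only [h3]
    have t2 : p * esym A y 2 ≤ p * ((N-1)*S^2/(2*N)) := by
      apply mul_le_mul_of_nonneg_left _ hp0
      rw [le_div_iff₀ h2Npos]
      linarith only [h2]
    have t3 : (y w0 * y w1 + y w0 * y w2 + y w1 * y w2) * S ≤ p^2/3 * S := by
      apply mul_le_mul_of_nonneg_right _ hS0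
      rw [le_div_iff₀ (by norm_num : (0:ℝ) < 3)]
      linarith only [hq]
    set M : ℝ := N*(N-1)*(N-2)*S^3/(6*N^3) + p*((N-1)*S^2/(2*N)) + p^2/3*S with hMdef
    have hyM : lagPoly (Kminus t) y ≤ M := by
      rw [decomp y, esym_one, ← hSdef, ← hpdef, hMdef]
      linarith only [t1, t2, t3]
    have hα0 : 0 ≤ S/N := div_nonneg hS0 hNpos.le
    have hSN : 3*(t:ℝ)*(S/N) = S := by
      rw [hNdef]
      field_simp
    have hα1 : 3*(t:ℝ)*(S/N) ≤ 1 := by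
      rw [hSN]; linarith only [hps, hp0]
    have hMF : M = (t:ℝ)/2 * (2*(S/N)^3 - (3*(t:ℝ)+3)*(S/N)^2 + 2*(S/N)) := by
      have hp1 : p = 1 - S := by linarith only [hps]
      rw [hMdef, hp1, hNdef]
      field_simp
      ring
    have hfk := f_key t ht a (S/N) ha h3ta hca hα0 hα1
    have ht2 : (0:ℝ) < (t:ℝ)/2 := by linarith only [htpos]
    have hle : lagPoly (Kminus t) y ≤ lagPoly (Kminus t) x := by
      rw [lagx]
      calc lagPoly (Kminus t) y ≤ M := hyM
      _ = (t:ℝ)/2 * (2*(S/N)^3 - (3*(t:ℝ)+3)*(S/N)^2 + 2*(S/N)) := hMF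
      _ ≤ (t:ℝ)/2 * (2*a^3 - (3*(t:ℝ)+3)*a^2 + 2*a) :=
        mul_le_mul_of_nonneg_left hfk.1 ht2.le
    refine ⟨hle, ?_⟩
    intro heq
    have hαa : S/N = a := by
      by_contra hne
      have hstrict := hfk.2 hne
      have hlt : M < lagPoly (Kminus t) x := by
        rw [lagx, hMF]
        exact mul_lt_mul_of_pos_left hstrict ht2
      linarith only [hyM, heq, hlt]
    have hSa : S = a*N := (div_eq_iff hNne).1 hαa
    have hpb : p = 3*b := by
      have hp1 : p = 1 - S := by linarith only [hps]
      rw [hp1, hSa, hbdef, hNdef]; ring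
    have hppos : 0 < p := by rw [hpb]; linarith only [hb]
    have hSpos : 0 < S := by rw [hSa]; exact mul_pos ha hNpos
    have hMeq : lagPoly (Kminus t) y = M := by
      have hMx : M = lagPoly (Kminus t) x := by rw [lagx, hMF, hαa]
      linarith only [heq, hMx, hyM]
    have hdec := decomp y
    rw [esym_one, ← hSdef, ← hpdef] at hdec
    rw [hdec, hMdef] at hMeq
    have hterm2 : p * esym A y 2 = p * ((N-1)*S^2/(2*N)) := by
      apply le_antisymm t2
      linarith only [hMeq, t1, t3]
    have hterm3 : (y w0 * y w1 + y w0 * y w2 + y w1 * y w2) * S = p^2/3 * S := by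
      apply le_antisymm t3
      linarith only [hMeq, t1, t2]
    have hE2eq : esym A y 2 = (N-1)*S^2/(2*N) := mul_left_cancel₀ (ne_of_gt hppos) hterm2
    have hqeq : y w0 * y w1 + y w0 * y w2 + y w1 * y w2 = p^2/3 :=
      mul_right_cancel₀ (ne_of_gt hSpos) hterm3
    -- coordinates in A are a
    have hP2 : ∑ i ∈ A, (y i)^2 = S^2/N := by
      have h2id := two_esym_two A y
      rw [← hSdef, hE2eq] at h2id
      have hstep : ∑ i ∈ A, (y i)^2 = S^2 - 2*((N-1)*S^2/(2*N)) := by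
        linarith only [h2id]
      rw [hstep]
      field_simp
      ring
    have hdev : ∑ i ∈ A, (y i - a)^2 = 0 := by
      rw [dev_identity A y a, hP2, ← hSdef, hcardA', hSa]
      field_simp
      ring
    have hyAa : ∀ i ∈ A, y i = a := by
      intro i hi
      have hsq := (Finset.sum_eq_zero_iff_of_nonneg (fun j _ => sq_nonneg (y j - a))).1 hdev i hi
      have h0 := pow_eq_zero_iff (n := 2) (by norm_num) |>.1 hsq
      linarith only [sub_eq_zero.1 h0]
    -- coordinates among the last three are b
    have hsum3 : y w0 + y w1 + y w2 = 3*b := by rw [← hpdef]; linarith only [hpb]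
    have hsq0 : (y w0 - y w1)^2 + (y w0 - y w2)^2 + (y w1 - y w2)^2 = 0 := by
      linear_combination (-6)*hqeq + (-2)*(p + (y w0 + y w1 + y w2))*hpdef
    have h01 : y w0 = y w1 := by
      have hz : (y w0 - y w1)^2 = 0 := by
        linarith only [hsq0, sq_nonneg (y w0 - y w1), sq_nonneg (y w0 - y w2),
          sq_nonneg (y w1 - y w2)]
      have := pow_eq_zero_iff (n := 2) (by norm_num) |>.1 hz
      linarith only [sub_eq_zero.1 this]
    have h02 : y w0 = y w2 := by
      have hz : (y w0 - y w2)^2 = 0 := by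
        linarith only [hsq0, sq_nonneg (y w0 - y w1), sq_nonneg (y w0 - y w2),
          sq_nonneg (y w1 - y w2)]
      have := pow_eq_zero_iff (n := 2) (by norm_num) |>.1 hz
      linarith only [sub_eq_zero.1 this]
    have hyw0 : y w0 = b := by linarith only [hsum3, h01, h02]
    funext i
    by_cases hi : (i:ℕ) < 3*t
    · have hiA : i ∈ A := by rw [hAdef, mem_filter]; exact ⟨mem_univ i, hi⟩
      rw [hxdef, if_pos hi]
      exact hyAa i hiA
    · rw [hxdef, if_neg hi]
      have hiv : i = w0 ∨ i = w1 ∨ i = w2 := by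
        have hlt := i.isLt
        rcases Nat.lt_or_ge (i:ℕ) (3*t+1) with h' | h'
        · left; refine Fin.ext ?_; rw [hw0def]; show (i:ℕ) = 3*t; omega
        · rcases Nat.lt_or_ge (i:ℕ) (3*t+2) with h'' | h''
          · right; left; refine Fin.ext ?_; rw [hw1def]; show (i:ℕ) = 3*t+1; omega
          · right; right; refine Fin.ext ?_; rw [hw2def]; show (i:ℕ) = 3*t+2; omega
      rcases hiv with rfl | rfl | rfl
      · exact hyw0
      · rw [← h01]; exact hyw0
      · rw [← h02]; exact hyw0
  -- assemble
  refine ⟨ha, ?_, hb, ?_, ?_, fun y hy => (main y hy).1, fun y hy => (main y hy).2⟩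
  · have ht0 : (0:ℝ) < 3*(t:ℝ) := by linarith
    rw [lt_div_iff₀ ht0]
    linarith [h3ta]
  · rw [hbdef]; ring
  · refine ⟨fun i => ?_, hsumx⟩
    rw [hxdef]
    split_ifs
    · exact ha.le
    · exact hb.le
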